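/- Let g ∈ G(m,1,n) be diagonal with weights (k_1,...,k_n) and let a doubled path factorization be given: a tuple ([(1 2); a_1], [(1 2); b_1], [(2 3); a_2], [(2 3); b_2], ..., [(n−1 n); a_{n−1}], [(n−1 n); b_{n−1}]). This tuple has product g if and only if b_i = a_i + k_1 + k_2 + ⋯ + k_i for each i = 1,...,n−1 and k_1 + ⋯ + k_n = 0. Consequently, a doubled path factorization of a given diagonal element of weight 0 is uniquely determined by the sequence (a_1, ..., a_{n−1}). -/

import Mathlib

/-- The wreath product `(ℤ/mℤ) ≀ S_n`, i.e. the group `G(m, 1, n)`: an element is a pair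
`[u; (a_1, ..., a_n)]` of a permutation `u ∈ S_n` and a weight vector in `(ℤ/mℤ)^n`. -/
structure WP (m n : ℕ) where
  perm : Equiv.Perm (Fin n)
  wt : Fin n → ZMod m

namespace WP

variable {m n : ℕ}

theorem ext' {g h : WP m n} (h1 : g.perm = h.perm) (h2 : ∀ i, g.wt i = h.wt i) : g = h := by
  cases g; cases h
  simp only [mk.injEq]
  exact ⟨h1, funext h2⟩

instance : Mul (WP m n) :=
  ⟨fun g h => ⟨g.perm * h.perm, fun i => g.wt (h.perm i) + h.wt i⟩⟩

instance : One (WP m n) := ⟨⟨1, fun _ => 0⟩⟩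

instance : Inv (WP m n) := ⟨fun g => ⟨g.perm⁻¹, fun i => -g.wt (g.perm⁻¹ i)⟩⟩

instance : Group (WP m n) where
  mul_assoc a b c := ext' (mul_assoc a.perm b.perm c.perm) (fun i => add_assoc _ _ _)
  one_mul a := ext' (one_mul a.perm) (fun i => zero_add _)
  mul_one a := ext' (mul_one a.perm) (fun i => add_zero _)
  inv_mul_cancel a := ext' (inv_mul_cancel a.perm) (fun i => by
    show -a.wt (a.perm⁻¹ (a.perm i)) + a.wt i = 0
    simp)

end WP

/-- The transposition-like reflection `[(i, i+1); c]` in `G(m, 1, n+1)`. -/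
def pathFactor (m n : ℕ) (i : Fin n) (c : ZMod m) : WP m (n + 1) :=
  ⟨Equiv.swap i.castSucc i.succ,
    fun x => if x = i.castSucc then c else if x = i.succ then -c else 0⟩

/-- The doubled path `([(1 2); a_1], [(1 2); b_1], ..., [(n−1 n); a_{n−1}], [(n−1 n); b_{n−1}])`
(here in `G(m,1,n+1)`, with `n` doubled pairs). -/
def doubledPath (m n : ℕ) (a b : Fin n → ZMod m) : List (WP m (n + 1)) :=
  (List.ofFn fun i : Fin n => [pathFactor m n i (a i), pathFactor m n i (b i)]).flatten

-- diag mul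
lemma diag_mul {m n : ℕ} (u v : Fin (n+1) → ZMod m) :
    (⟨1, u⟩ : WP m (n+1)) * ⟨1, v⟩ = ⟨1, fun j => u j + v j⟩ := by
  apply WP.ext' (one_mul 1)
  intro i; rfl

lemma prod_ofFn_diag {m n N : ℕ} (f : Fin N → (Fin (n+1) → ZMod m)) :
    (List.ofFn fun i => (⟨1, f i⟩ : WP m (n+1))).prod = ⟨1, fun j => ∑ i, f i j⟩ := by
  induction N with
  | zero => simp [List.ofFn_zero]; rfl
  | succ N ih =>
    rw [List.ofFn_succ, List.prod_cons, ih, diag_mul]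
    congr 1
    funext j
    rw [Fin.sum_univ_succ]

lemma pair_prod {m n : ℕ} (i : Fin n) (x y : ZMod m) :
    pathFactor m n i x * pathFactor m n i y =
      ⟨1, fun j => if j = i.castSucc then y - x else if j = i.succ then -(y - x) else 0⟩ := by
  have hne : i.castSucc ≠ i.succ := (Fin.castSucc_lt_succ : i.castSucc < i.succ).ne
  apply WP.ext' (Equiv.swap_mul_self _ _)
  intro j
  show (if Equiv.swap i.castSucc i.succ j = i.castSucc then x
        else if Equiv.swap i.castSucc i.succ j = i.succ then -x else 0) +
       (if j = i.castSucc then y else if j = i.succ then -y else 0) = _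
  rcases eq_or_ne j i.castSucc with h | h
  · subst h
    simp [Equiv.swap_apply_left, hne, hne.symm]
    ring
  · rcases eq_or_ne j i.succ with h2 | h2
    · subst h2
      simp [Equiv.swap_apply_right, hne, h]
      ring
    · simp [Equiv.swap_apply_of_ne_of_ne h h2, h, h2]

lemma doubledPath_prod {m n : ℕ} (a b : Fin n → ZMod m) :
    (doubledPath m n a b).prod =
      ⟨1, fun j => ∑ i : Fin n,
        (if j = i.castSucc then b i - a i else if j = i.succ then -(b i - a i) else 0)⟩ := by
  rw [doubledPath, List.prod_flatten, List.map_ofFn]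
  have : ((fun l => List.prod l) ∘ fun i : Fin n =>
      [pathFactor m n i (a i), pathFactor m n i (b i)]) =
      fun i => (⟨1, fun j => if j = i.castSucc then b i - a i
        else if j = i.succ then -(b i - a i) else 0⟩ : WP m (n+1)) := by
    funext i
    simp only [Function.comp, List.prod_cons, List.prod_nil, mul_one]
    exact pair_prod i (a i) (b i)
  rw [this, prod_ofFn_diag]

lemma sum_tent {m n : ℕ} (d : Fin n → ZMod m) (j : Fin (n+1)) :
    ∑ i : Fin n, (if j = i.castSucc then d i else if j = i.succ then -d i else 0)
    = (if h : (j:ℕ) < n then d ⟨j, h⟩ else 0)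
      - (if h : 0 < (j:ℕ) then d ⟨(j:ℕ)-1, by omega⟩ else 0) := by
  have split : ∀ i : Fin n, (if j = i.castSucc then d i else if j = i.succ then -d i else 0)
      = (if j = i.castSucc then d i else 0) + (if j = i.succ then -d i else 0) := by
    intro i
    rcases eq_or_ne j i.castSucc with h | h
    · have : j ≠ i.succ := h ▸ (Fin.castSucc_lt_succ : i.castSucc < i.succ).ne
      simp [h, this, (Fin.castSucc_lt_succ : i.castSucc < i.succ).ne]
    · simp [h]
  simp_rw [split]
  rw [Finset.sum_add_distrib, sub_eq_add_neg]
  congr 1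
  · by_cases h : (j:ℕ) < n
    · have : ∀ i : Fin n, (j = i.castSucc) ↔ (i = ⟨j, h⟩) := by
        intro i
        simp only [Fin.ext_iff, Fin.coe_castSucc]
        omega
      simp_rw [this]
      rw [Finset.sum_ite_eq' Finset.univ (⟨(j:ℕ), h⟩ : Fin n) d]
      simp [h]
    · have : ∀ i : Fin n, j ≠ i.castSucc := by
        intro i he
        rw [Fin.ext_iff, Fin.coe_castSucc] at he
        omega
      simp [this, h]
  · by_cases h : 0 < (j:ℕ)
    · have hlt : (j:ℕ) - 1 < n := by omega
      have : ∀ i : Fin n, (j = i.succ) ↔ (i = ⟨(j:ℕ)-1, hlt⟩) := by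
        intro i
        simp only [Fin.ext_iff, Fin.val_succ]
        omega
      simp_rw [this]
      rw [Finset.sum_ite_eq' Finset.univ (⟨(j:ℕ)-1, hlt⟩ : Fin n) (fun i => -d i)]
      simp [h]
    · have : ∀ i : Fin n, j ≠ i.succ := by
        intro i he
        rw [Fin.ext_iff, Fin.val_succ] at he
        omega
      simp [this, h]


def Psum (n : ℕ) (k : Fin (n+1) → ZMod m) (t : ℕ) : ZMod m :=
  ∑ j ∈ Finset.univ.filter (fun j : Fin (n + 1) => (j : ℕ) ≤ t), k j

variable {m n : ℕ}

lemma Psum_zero (k : Fin (n+1) → ZMod m) : Psum n k 0 = k 0 := by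
  rw [Psum, Finset.sum_filter]
  have : ∀ j : Fin (n+1), ((j:ℕ) ≤ 0) ↔ (j = 0) := by
    intro j
    rw [Fin.ext_iff, Fin.val_zero]
    omega
  simp_rw [this]
  rw [Finset.sum_ite_eq' Finset.univ (0 : Fin (n+1)) k]
  simp

lemma Psum_succ (k : Fin (n+1) → ZMod m) (t : ℕ) (ht : t + 1 ≤ n) :
    Psum n k (t+1) = Psum n k t + k ⟨t+1, by omega⟩ := by
  rw [Psum, Psum, Finset.sum_filter, Finset.sum_filter]
  have : ∀ j : Fin (n+1), (if (j:ℕ) ≤ t+1 then k j else 0)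
      = (if (j:ℕ) ≤ t then k j else 0) + (if j = ⟨t+1, by omega⟩ then k j else 0) := by
    intro j
    by_cases h1 : (j:ℕ) ≤ t
    · have h2 : (j:ℕ) ≤ t + 1 := by omega
      have h3 : j ≠ ⟨t+1, by omega⟩ :=
        Fin.ne_of_val_ne (show (j:ℕ) ≠ t + 1 by omega)
      simp [h1, h2, h3]
    · by_cases h2 : j = ⟨t+1, by omega⟩
      · have h3 : (j:ℕ) ≤ t + 1 := by rw [h2]
        simp [h1, h2, h3]
      · have h2' : (j:ℕ) ≠ t + 1 := fun e => h2 (Fin.ext e)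
        have h3 : ¬ (j:ℕ) ≤ t + 1 := by omega
        simp [h1, h2, h3]
  simp_rw [this]
  rw [Finset.sum_add_distrib, Finset.sum_ite_eq' Finset.univ (⟨t+1, by omega⟩ : Fin (n+1)) k]
  simp

lemma Psum_top (k : Fin (n+1) → ZMod m) (hn : 0 < n) :
    ∑ j, k j = Psum n k (n-1) + k ⟨n, by omega⟩ := by
  rw [Psum, Finset.sum_filter]
  have : ∀ j : Fin (n+1), k j
      = (if (j:ℕ) ≤ n-1 then k j else 0) + (if j = ⟨n, by omega⟩ then k j else 0) := by
    intro j
    by_cases h1 : (j:ℕ) ≤ n-1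
    · have h3 : j ≠ ⟨n, by omega⟩ :=
        Fin.ne_of_val_ne (show (j:ℕ) ≠ n by omega)
      simp [h1, h3]
    · have h2 : j = ⟨n, by omega⟩ :=
        Fin.ext (show (j:ℕ) = n by omega)
      rw [if_neg h1, if_pos h2, zero_add]
  rw [Finset.sum_congr rfl (fun j _ => this j)]
  rw [Finset.sum_add_distrib, Finset.sum_ite_eq' Finset.univ (⟨n, by omega⟩ : Fin (n+1)) k]
  simp

lemma key_iff (k : Fin (n+1) → ZMod m) (d : Fin n → ZMod m) :
    (∀ j : Fin (n+1), (if h : (j:ℕ) < n then d ⟨j, h⟩ else 0)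
        - (if h : 0 < (j:ℕ) then d ⟨(j:ℕ)-1, by omega⟩ else 0) = k j)
    ↔ ((∀ i : Fin n, d i = Psum n k (i:ℕ)) ∧ ∑ j, k j = 0) := by
  constructor
  · intro H
    have main : ∀ t (ht : t < n), d ⟨t, ht⟩ = Psum n k t := by
      intro t
      induction t with
      | zero =>
        intro ht
        have h0 := H ⟨0, by omega⟩
        simp only [dif_pos ht, dif_neg (lt_irrefl 0), sub_zero] at h0
        rw [h0, Psum_zero]
        congr 1
      | succ t ih =>
        intro ht
        have ht' : t < n := by omega
        have h1 := H ⟨t+1, by omega⟩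
        simp only [dif_pos ht, dif_pos (Nat.succ_pos t), Nat.add_sub_cancel] at h1
        have : d ⟨t+1, ht⟩ = d ⟨t, ht'⟩ + k ⟨t+1, by omega⟩ := by
          rw [← h1]; ring
        rw [this, ih ht', Psum_succ k t (by omega)]
    constructor
    · intro i
      have := main i.val i.isLt
      simpa using this
    · rcases Nat.eq_zero_or_pos n with hn | hn
      · subst hn
        have h0 := H 0
        simp at h0
        rw [Fin.sum_univ_one, ← h0]
      · have h1 := H ⟨n, by omega⟩
        simp only [dif_neg (lt_irrefl n), dif_pos hn, zero_sub] at h1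
        rw [Psum_top k hn, ← h1, main (n-1) (by omega)]
        ring
  · rintro ⟨hd, hs⟩ j
    rcases j with ⟨jv, hj⟩
    match jv, hj with
    | 0, hj =>
      rcases Nat.eq_zero_or_pos n with hn | hn
      · subst hn
        rw [Fin.sum_univ_one] at hs
        have h0 : (⟨0, hj⟩ : Fin 1) = 0 := Fin.ext rfl
        rw [h0]
        rw [dif_neg (Nat.not_lt_zero _),
          dif_neg (show ¬ (0:ℕ) < ((0 : Fin (0+1)):ℕ) by simp), sub_zero, hs]
      · simp only [dif_pos hn, dif_neg (lt_irrefl 0), sub_zero]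
        have := hd ⟨0, hn⟩
        rw [this, Psum_zero]
        congr 1
    | t+1, hj =>
      by_cases h : t + 1 < n
      · have ht' : t < n := by omega
        simp only [dif_pos h, dif_pos (Nat.succ_pos t), Nat.add_sub_cancel]
        have e1 := hd ⟨t+1, h⟩
        have e2 := hd ⟨t, ht'⟩
        rw [e1, e2, Psum_succ k t (by omega)]
        ring
      · have hn : 0 < n := by omega
        have htop : t + 1 = n := by omega
        simp only [dif_neg h, dif_pos (Nat.succ_pos t), Nat.add_sub_cancel, zero_sub]
        have e2 := hd ⟨t, by omega⟩
        rw [Psum_top k hn] at hs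
        have : t = n - 1 := by omega
        subst this
        have hk : k ⟨n-1+1, hj⟩ = k ⟨n, by omega⟩ :=
          congrArg k (Fin.ext (show n-1+1 = n by omega))
        rw [hk, e2]
        linear_combination -hs



/-- A doubled path has product the diagonal element `[id; (k_1,...,k_n)]` if and only if
`b_i = a_i + k_1 + ⋯ + k_i` for all `i` and `k_1 + ⋯ + k_n = 0`. Consequently, a doubled
path factorization of a given diagonal element of weight `0` is uniquely determined by
`(a_1, ..., a_{n−1})`. -/
theorem doubledPath_prod_iff (m n : ℕ) (k : Fin (n + 1) → ZMod m) :
    (∀ a b : Fin n → ZMod m,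
      (doubledPath m n a b).prod = (⟨1, k⟩ : WP m (n + 1)) ↔
        ((∀ i : Fin n,
            b i = a i + ∑ j ∈ Finset.univ.filter (fun j : Fin (n + 1) => (j : ℕ) ≤ (i : ℕ)), k j) ∧
          ∑ j, k j = 0)) ∧
    (∀ a b b' : Fin n → ZMod m,
      (doubledPath m n a b).prod = (⟨1, k⟩ : WP m (n + 1)) →
      (doubledPath m n a b').prod = (⟨1, k⟩ : WP m (n + 1)) → b = b') := by
  have main : ∀ a b : Fin n → ZMod m,
      (doubledPath m n a b).prod = (⟨1, k⟩ : WP m (n + 1)) ↔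
        ((∀ i : Fin n,
            b i = a i + ∑ j ∈ Finset.univ.filter (fun j : Fin (n + 1) => (j : ℕ) ≤ (i : ℕ)), k j) ∧
          ∑ j, k j = 0) := by
    intro a b
    rw [doubledPath_prod]
    have hinj : ∀ W : Fin (n+1) → ZMod m,
        ((⟨1, W⟩ : WP m (n + 1)) = ⟨1, k⟩) ↔ ∀ j, W j = k j := by
      intro W
      constructor
      · intro h j
        exact congrFun (congrArg WP.wt h) j
      · intro h
        exact WP.ext' rfl h
    rw [hinj]
    simp_rw [sum_tent (fun i => b i - a i)]
    rw [key_iff k (fun i => b i - a i)]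
    simp only [Psum]
    simp_rw [sub_eq_iff_eq_add']
  refine ⟨main, fun a b b' h h' => funext fun i => ?_⟩
  rw [((main a b).mp h).1 i, ((main a b').mp h').1 i]
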